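/- Let (φ, ℓ) be a gauge datum with r = φ∘ℓ, let a₀ : E → 𝔤 be linear, let f : ℝ → ℝ be smooth with f(0) = 0 and f(1) = 1, and for t ∈ [0,1] set a_t := a₀ + f(t)·( (φ∘a₀ − r) − a₀ ). Then for all x, y ∈ E: (1/2) ∫₀¹ (a_t ∧_B ȧ_t)(x, y) dt = (1/2)( a₀ ∧_B (φ∘a₀) )(x, y) + (1/2)( r ∧_B a₀ )(x, y); consequently (1/2)(ℓ ∧_B a₀) + (1/2)∫₀¹ a_t ∧_B ȧ_t dt = (1/2)((ℓ + r) ∧_B a₀) + (1/2) a₀ ∧_B (φ∘a₀). (This is the fiberwise form of the paper's Lemma Q^α = ((θ^L + θ^R)/2)·α₀ + (1/2) α₀ · Ad_g α₀ for the interpolated family of connection 1-forms α_t = α₀ + f(t)(g•α₀ − α₀).) -/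

import Mathlib

/-- `(a ∧_B b)(x, y) = B(a x, b y) - B(a y, b x)` for maps `a, b : E → 𝔤`. -/
def wedgeB {𝔤 E : Type*} [NormedAddCommGroup 𝔤] [NormedSpace ℝ 𝔤]
    [AddCommGroup E] [Module ℝ E]
    (B : 𝔤 →ₗ[ℝ] 𝔤 →ₗ[ℝ] ℝ) (a b : E → 𝔤) (x y : E) : ℝ :=
  B (a x) (b y) - B (a y) (b x)

/-- for the interpolated family `a_t = a₀ + f(t)·((φ∘a₀ - r) - a₀)`
with `r = φ∘ℓ`, `f` smooth, `f 0 = 0`, `f 1 = 1`: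
`(1/2)∫₀¹ a_t ∧_B ȧ_t dt = (1/2)(a₀ ∧_B (φ∘a₀)) + (1/2)(r ∧_B a₀)`, and consequently
`(1/2)(ℓ ∧_B a₀) + (1/2)∫₀¹ a_t ∧_B ȧ_t dt = (1/2)((ℓ+r) ∧_B a₀) + (1/2)(a₀ ∧_B (φ∘a₀))`. -/
theorem Q_interpolated_family
    {𝔤 E : Type*} [NormedAddCommGroup 𝔤] [NormedSpace ℝ 𝔤] [FiniteDimensional ℝ 𝔤]
    [AddCommGroup E] [Module ℝ E]
    (br : 𝔤 →ₗ[ℝ] 𝔤 →ₗ[ℝ] 𝔤)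
    (br_alt : ∀ x : 𝔤, br x x = 0)
    (br_jacobi : ∀ x y z : 𝔤, br (br x y) z + br (br y z) x + br (br z x) y = 0)
    (B : 𝔤 →ₗ[ℝ] 𝔤 →ₗ[ℝ] ℝ)
    (B_symm : ∀ x y : 𝔤, B x y = B y x)
    (B_inv : ∀ x y z : 𝔤, B (br x y) z = B x (br y z))
    (φ : 𝔤 ≃ₗ[ℝ] 𝔤)
    (hφbr : ∀ x y : 𝔤, φ (br x y) = br (φ x) (φ y))
    (hφB : ∀ x y : 𝔤, B (φ x) (φ y) = B x y)
    (ℓ : E →ₗ[ℝ] 𝔤) (a₀ : E →ₗ[ℝ] 𝔤)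
    (f : ℝ → ℝ) (hf : ContDiff ℝ (⊤ : ℕ∞) f) (hf0 : f 0 = 0) (hf1 : f 1 = 1)
    (a : ℝ → E → 𝔤)
    (ha : ∀ (t : ℝ) (x : E), a t x = a₀ x + f t • ((φ (a₀ x) - φ (ℓ x)) - a₀ x))
    (x y : E) :
    (1/2 : ℝ) * (∫ t in (0:ℝ)..1,
        wedgeB B (a t) (fun e => deriv (fun s => a s e) t) x y)
      = (1/2 : ℝ) * wedgeB B (⇑a₀) (fun e => φ (a₀ e)) x y
        + (1/2 : ℝ) * wedgeB B (fun e => φ (ℓ e)) (⇑a₀) x y ∧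
    (1/2 : ℝ) * wedgeB B (⇑ℓ) (a 0) x y
      + (1/2 : ℝ) * (∫ t in (0:ℝ)..1,
          wedgeB B (a t) (fun e => deriv (fun s => a s e) t) x y)
      = (1/2 : ℝ) * wedgeB B (fun e => ℓ e + φ (ℓ e)) (⇑a₀) x y
        + (1/2 : ℝ) * wedgeB B (⇑a₀) (fun e => φ (a₀ e)) x y := by
  have hfd : Differentiable ℝ f := hf.differentiable (by simp)
  set c : E → 𝔤 := fun e => (φ (a₀ e) - φ (ℓ e)) - a₀ e with hc
  have ha' : ∀ (t : ℝ) (e : E), a t e = a₀ e + f t • c e := by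
    intro t e; rw [ha]
  have hderiv : ∀ (t : ℝ) (e : E), deriv (fun s => a s e) t = deriv f t • c e := by
    intro t e
    have heq : (fun s => a s e) = fun s => a₀ e + f s • c e := by
      funext s; rw [ha']
    rw [heq, deriv_const_add]
    exact ((hfd t).hasDerivAt.smul_const (c e)).deriv
  set W : ℝ := wedgeB B (⇑a₀) c x y with hWdef
  have hW : ∀ t, wedgeB B (a t) (fun e => deriv (fun s => a s e) t) x y
      = deriv f t * W := by
    intro t
    rw [hWdef]
    simp only [wedgeB]
    rw [hderiv t x, hderiv t y, ha' t x, ha' t y]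
    simp only [map_add, map_smul, LinearMap.add_apply, LinearMap.smul_apply, smul_eq_mul]
    linear_combination (f t * deriv f t) * B_symm (c x) (c y)
  have hint : (∫ t in (0:ℝ)..1,
      wedgeB B (a t) (fun e => deriv (fun s => a s e) t) x y) = W := by
    rw [intervalIntegral.integral_congr (g := fun t => deriv f t * W)
      (fun t _ => hW t)]
    rw [intervalIntegral.integral_mul_const]
    have : (∫ t in (0:ℝ)..1, deriv f t) = f 1 - f 0 :=
      intervalIntegral.integral_deriv_eq_sub (fun t _ => hfd t)
        ((hf.continuous_deriv (by exact_mod_cast le_top)).intervalIntegrable 0 1)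
    rw [this, hf1, hf0]; ring
  have hWval : W = wedgeB B (⇑a₀) (fun e => φ (a₀ e)) x y
      + wedgeB B (fun e => φ (ℓ e)) (⇑a₀) x y := by
    rw [hWdef]
    simp only [wedgeB, hc, map_sub]
    linear_combination (- B_symm (a₀ x) (a₀ y)) - (B_symm (a₀ x) (φ (ℓ y)))
      + (B_symm (a₀ y) (φ (ℓ x)))
  constructor
  · rw [hint, hWval]; ring
  · rw [hint, hWval]
    have ha0 : a 0 = ⇑a₀ := by
      funext e; rw [ha, hf0, zero_smul, add_zero]
    rw [ha0]
    simp only [wedgeB, map_add, LinearMap.add_apply]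
    ring
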